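/- Let B, C, D be n×n Hermitian matrices with B positive semidefinite and nonzero, C positive semidefinite, and D positive definite. Define μ₊(M, B) = inf{x^H M x : x^H B x = 1}. Then for any α > 1, μ₊(C + αD, B) > μ₊(C + D, B). -/

import Mathlib

open Matrix ComplexOrder

noncomputable def quadForm {n : ℕ} (A : Matrix (Fin n) (Fin n) ℂ) (x : Fin n → ℂ) : ℝ :=
  (star x ⬝ᵥ A.mulVec x).re

noncomputable def muPlus {n : ℕ} (A B : Matrix (Fin n) (Fin n) ℂ) : ℝ :=
  sInf {r : ℝ | ∃ x : Fin n → ℂ, quadForm B x = 1 ∧ quadForm A x = r}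

lemma dotProduct_star_self_re {n : ℕ} (y : Fin n → ℂ) :
    (star y ⬝ᵥ y).re = ∑ i, ‖y i‖ ^ 2 := by
  rw [dotProduct, Complex.re_sum]
  refine Finset.sum_congr rfl fun i _ => ?_
  rw [Pi.star_apply, Complex.star_def, mul_comm, Complex.mul_conj, Complex.normSq_eq_norm_sq,
    Complex.ofReal_re]

lemma quadForm_conjTranspose_mul_self {n : ℕ} (A : Matrix (Fin n) (Fin n) ℂ)
    (x : Fin n → ℂ) : quadForm (Aᴴ * A) x = ∑ i, ‖A.mulVec x i‖ ^ 2 := by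
  rw [quadForm, ← Matrix.mulVec_mulVec, Matrix.dotProduct_mulVec, ← Matrix.star_mulVec,
    dotProduct_star_self_re]

lemma opbound {n : ℕ} (M : Matrix (Fin n) (Fin n) ℂ) :
    ∃ K : ℝ, 0 ≤ K ∧ ∀ x : Fin n → ℂ,
      ∑ i, ‖M.mulVec x i‖ ^ 2 ≤ K * ∑ i, ‖x i‖ ^ 2 := by
  let L : EuclideanSpace ℂ (Fin n) →L[ℂ] EuclideanSpace ℂ (Fin n) :=
    LinearMap.toContinuousLinearMap (Matrix.toEuclideanLin M)
  refine ⟨‖L‖ ^ 2, by positivity, fun x => ?_⟩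
  set y : EuclideanSpace ℂ (Fin n) := (WithLp.equiv 2 _).symm x with hy
  have h1 : L y = (WithLp.equiv 2 _).symm (M.mulVec x) := by
    simp [L, hy, Matrix.toLpLin_toLp, Matrix.toLin'_apply]
  have h2 : ‖L y‖ ≤ ‖L‖ * ‖y‖ := L.le_opNorm y
  have h3 : ‖L y‖ ^ 2 = ∑ i, ‖M.mulVec x i‖ ^ 2 := by
    rw [h1, EuclideanSpace.norm_eq, Real.sq_sqrt (by positivity)]
    rfl
  have h4 : ‖y‖ ^ 2 = ∑ i, ‖x i‖ ^ 2 := by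
    rw [EuclideanSpace.norm_eq, Real.sq_sqrt (by positivity)]
    rfl
  calc ∑ i, ‖M.mulVec x i‖ ^ 2 = ‖L y‖ ^ 2 := h3.symm
    _ ≤ (‖L‖ * ‖y‖) ^ 2 := by
        exact pow_le_pow_left₀ (norm_nonneg _) h2 2
    _ = ‖L‖ ^ 2 * ∑ i, ‖x i‖ ^ 2 := by rw [mul_pow, h4]

lemma quadForm_add {n : ℕ} (P Q : Matrix (Fin n) (Fin n) ℂ) (x : Fin n → ℂ) :
    quadForm (P + Q) x = quadForm P x + quadForm Q x := by
  simp [quadForm, Matrix.add_mulVec, dotProduct_add]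

lemma quadForm_real_smul {n : ℕ} (r : ℝ) (P : Matrix (Fin n) (Fin n) ℂ) (x : Fin n → ℂ) :
    quadForm ((r : ℂ) • P) x = r * quadForm P x := by
  simp [quadForm, Matrix.smul_mulVec, dotProduct_smul, smul_eq_mul,
    Complex.re_ofReal_mul]

lemma quadForm_smul_vec {n : ℕ} (M : Matrix (Fin n) (Fin n) ℂ) (r : ℝ) (x : Fin n → ℂ) :
    quadForm M ((r : ℂ) • x) = r ^ 2 * quadForm M x := by
  rw [quadForm, quadForm, Matrix.mulVec_smul, star_smul, smul_dotProduct, dotProduct_smul]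
  simp only [Complex.star_def, Complex.conj_ofReal, smul_eq_mul, ← mul_assoc,
    ← Complex.ofReal_mul, Complex.re_ofReal_mul]
  ring

lemma quadForm_nonneg {n : ℕ} {M : Matrix (Fin n) (Fin n) ℂ} (hM : M.PosSemidef)
    (x : Fin n → ℂ) : 0 ≤ quadForm M x := by
  simpa [quadForm, RCLike.re_to_complex] using hM.re_dotProduct_nonneg x

lemma exists_unit {n : ℕ} {B : Matrix (Fin n) (Fin n) ℂ} (hB : B.PosSemidef)
    (hB0 : B ≠ 0) : ∃ x : Fin n → ℂ, quadForm B x = 1 := by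
  obtain ⟨A, hA⟩ : ∃ A : Matrix (Fin n) (Fin n) ℂ, B = Aᴴ * A := by
    open scoped MatrixOrder in
    obtain ⟨A, hA⟩ := CStarAlgebra.nonneg_iff_eq_star_mul_self.mp hB.nonneg
    exact ⟨A, hA⟩
  have hA0 : A ≠ 0 := by
    intro h
    exact hB0 (by rw [hA, h]; simp)
  have hij : ∃ i j, A i j ≠ 0 := by
    by_contra h
    push_neg at h
    exact hA0 (by ext i j; simpa using h i j)
  obtain ⟨i, j, hAij⟩ := hij
  set x₀ : Fin n → ℂ := Pi.single j 1 with hx₀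
  have hmv : A.mulVec x₀ = fun k => A k j := by
    ext k
    simp [hx₀, Matrix.mulVec_single]
  have ht : 0 < quadForm B x₀ := by
    rw [hA, quadForm_conjTranspose_mul_self, hmv]
    refine Finset.sum_pos' (fun k _ => by positivity) ⟨i, Finset.mem_univ i, pow_pos (norm_pos_iff.mpr hAij) 2⟩
  set t := quadForm B x₀ with htdef
  refine ⟨((Real.sqrt t⁻¹ : ℝ) : ℂ) • x₀, ?_⟩
  rw [quadForm_smul_vec, Real.sq_sqrt (by positivity), ← htdef, inv_mul_cancel₀ ht.ne']

lemma quadForm_le_of_posDef {n : ℕ} {B D : Matrix (Fin n) (Fin n) ℂ}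
    (hB : B.PosSemidef) (hD : D.PosDef) :
    ∃ c : ℝ, 0 < c ∧ ∀ x : Fin n → ℂ, quadForm B x ≤ c * quadForm D x := by
  obtain ⟨A, hA⟩ : ∃ A : Matrix (Fin n) (Fin n) ℂ, B = Aᴴ * A := by
    open scoped MatrixOrder in
    obtain ⟨A, hA⟩ := CStarAlgebra.nonneg_iff_eq_star_mul_self.mp hB.nonneg
    exact ⟨A, hA⟩
  obtain ⟨S, hSS, hSH⟩ : ∃ S : Matrix (Fin n) (Fin n) ℂ, S * S = D ∧ Sᴴ = S :=
    open scoped MatrixOrder in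
      ⟨CFC.sqrt D, CFC.sqrt_mul_sqrt_self D hD.posSemidef.nonneg,
        (CFC.sqrt_nonneg D).posSemidef.isHermitian⟩
  have hDq : ∀ x, quadForm D x = ∑ i, ‖S.mulVec x i‖ ^ 2 := by
    intro x
    rw [show D = Sᴴ * S by rw [hSH, hSS]]
    exact quadForm_conjTranspose_mul_self S x
  have hdet : S.det ≠ 0 := by
    intro h
    have : D.det = 0 := by rw [← hSS, Matrix.det_mul, h, mul_zero]
    exact hD.det_pos.ne' this
  have hSinv : S⁻¹ * S = 1 := Matrix.nonsing_inv_mul S (isUnit_iff_ne_zero.mpr hdet)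
  obtain ⟨K, hK0, hK⟩ := opbound (A * S⁻¹)
  refine ⟨K + 1, by linarith, fun x => ?_⟩
  have hmv : (A * S⁻¹).mulVec (S.mulVec x) = A.mulVec x := by
    rw [Matrix.mulVec_mulVec, mul_assoc, hSinv, mul_one]
  have h1 : quadForm B x ≤ K * quadForm D x := by
    rw [hA, quadForm_conjTranspose_mul_self, hDq, ← hmv]
    exact hK (S.mulVec x)
  have h2 : 0 ≤ quadForm D x := quadForm_nonneg hD.posSemidef x
  nlinarith

theorem stmt5 {n : ℕ} (B C D : Matrix (Fin n) (Fin n) ℂ)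
    (hB : B.PosSemidef) (hB0 : B ≠ 0) (hC : C.PosSemidef) (hD : D.PosDef)
    (α : ℝ) (hα : 1 < α) :
    muPlus (C + D) B < muPlus (C + (α : ℂ) • D) B := by
  obtain ⟨c, hc, hcb⟩ := quadForm_le_of_posDef hB hD
  obtain ⟨x₁, hx₁⟩ := exists_unit hB hB0
  set S₁ := {r : ℝ | ∃ x : Fin n → ℂ, quadForm B x = 1 ∧ quadForm (C + D) x = r} with hS₁
  set S₂ := {r : ℝ | ∃ x : Fin n → ℂ, quadForm B x = 1 ∧ quadForm (C + (α : ℂ) • D) x = r}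
    with hS₂
  have hne₁ : S₁.Nonempty := ⟨_, x₁, hx₁, rfl⟩
  have hne₂ : S₂.Nonempty := ⟨_, x₁, hx₁, rfl⟩
  have hbdd₁ : BddBelow S₁ := by
    refine ⟨0, fun r hr => ?_⟩
    obtain ⟨x, _, hr⟩ := hr
    exact hr ▸ quadForm_nonneg (hC.add hD.posSemidef) x
  -- key lower bound for quadForm D on the constraint set
  have hDlb : ∀ x : Fin n → ℂ, quadForm B x = 1 → c⁻¹ ≤ quadForm D x := by
    intro x hx
    have := hcb x
    rw [hx] at this
    rw [inv_le_iff_one_le_mul₀' hc]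
    linarith
  have hkey : ∀ r ∈ S₂, sInf S₁ + (α - 1) * c⁻¹ ≤ r := by
    rintro r ⟨x, hx, rfl⟩
    have h1 : quadForm (C + (α : ℂ) • D) x
        = quadForm (C + D) x + (α - 1) * quadForm D x := by
      rw [quadForm_add, quadForm_add, quadForm_real_smul]
      ring
    have h2 : sInf S₁ ≤ quadForm (C + D) x := csInf_le hbdd₁ ⟨x, hx, rfl⟩
    have h3 : (α - 1) * c⁻¹ ≤ (α - 1) * quadForm D x :=
      mul_le_mul_of_nonneg_left (hDlb x hx) (by linarith)
    rw [h1]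
    linarith
  have hfin : sInf S₁ + (α - 1) * c⁻¹ ≤ sInf S₂ := le_csInf hne₂ hkey
  have hpos : 0 < (α - 1) * c⁻¹ := mul_pos (by linarith) (inv_pos.mpr hc)
  calc muPlus (C + D) B = sInf S₁ := rfl
    _ < sInf S₁ + (α - 1) * c⁻¹ := by linarith
    _ ≤ sInf S₂ := hfin
    _ = muPlus (C + (α : ℂ) • D) B := rfl
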